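/- Let L ⊣ R : D → C be an adjunction where R is faithful and reflects isomorphisms. Then the adjoint transpose ē : LC → D of any extremal epimorphism e : C → RD is an extremal epimorphism in D. -/
import Mathlib


open CategoryTheory

universe v₁ v₂ u₁ u₂

/-- An extremal epimorphism: an epimorphism `f` such that whenever `f = g ≫ m`
with `m` a monomorphism, `m` is an isomorphism. -/
def IsExtremalEpi {C : Type u₁} [Category.{v₁} C] {X Y : C} (f : X ⟶ Y) : Prop :=
  Epi f ∧ ∀ ⦃Z : C⦄ (g : X ⟶ Z) (m : Z ⟶ Y), Mono m → f = g ≫ m → IsIso m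

/-- let `L ⊣ R` be an adjunction where `R` is faithful and
reflects isomorphisms. Then the adjoint transpose `ē : LC → D` of any extremal
epimorphism `e : C → RD` is an extremal epimorphism. -/
theorem transpose_of_extremal_epi_is_extremal_epi
    {C : Type u₁} [Category.{v₁} C] {D : Type u₂} [Category.{v₂} D]
    (L : C ⥤ D) (R : D ⥤ C) (adj : L ⊣ R)
    [R.Faithful] [R.ReflectsIsomorphisms]
    {c : C} {d : D} (e : c ⟶ R.obj d) (he : IsExtremalEpi e) :
    IsExtremalEpi ((adj.homEquiv c d).symm e) := by
  obtain ⟨he1, he2⟩ := he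
  constructor
  · constructor
    intro x u v h
    have h2 : (adj.homEquiv c x) ((adj.homEquiv c d).symm e ≫ u)
        = (adj.homEquiv c x) ((adj.homEquiv c d).symm e ≫ v) := congrArg _ h
    rw [adj.homEquiv_naturality_right, adj.homEquiv_naturality_right,
      Equiv.apply_symm_apply] at h2
    haveI := he1
    exact R.map_injective ((cancel_epi e).mp h2)
  · intro z g m hm heq
    haveI := hm
    haveI : Mono (R.map m) := ⟨fun {x} u v h => by
      have h2 : (adj.homEquiv x d).symm (u ≫ R.map m)
          = (adj.homEquiv x d).symm (v ≫ R.map m) := congrArg _ h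
      rw [adj.homEquiv_naturality_right_symm, adj.homEquiv_naturality_right_symm] at h2
      exact (adj.homEquiv x z).symm.injective ((cancel_mono m).mp h2)⟩
    have heq2 : e = (adj.homEquiv c z) g ≫ R.map m := by
      have := congrArg (adj.homEquiv c d) heq
      rwa [Equiv.apply_symm_apply, adj.homEquiv_naturality_right] at this
    haveI := he2 _ _ this heq2
    exact isIso_of_reflects_iso m R
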